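/- Let I be a nonempty finite index set, let A_i ⊆ V for each i ∈ I, let A = △_{i∈I} A_i be the iterated symmetric difference (the set of elements lying in an odd number of the A_i), and suppose |𝔛_v| ≥ 2 for every v ∈ ⋃_{i∈I} A_i. Then for every A-degenerate function λ : 𝔛_A → ℝ there exist a finite index set J and A_i-degenerate functions λ_i^j : 𝔛_{A_i} → ℝ (for i ∈ I, j ∈ J) such that for every x ∈ 𝔛_{⋃_i A_i}, λ(x_A) = Σ_{j∈J} ∏_{i∈I} λ_i^j(x_{A_i}). -/

import Mathlib

open Finset

noncomputable section SDAux
universe u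

/-- Basic mean-zero function on a finite type: indicator of `t` minus the average. -/
def ebase (α : Type u) [Fintype α] [DecidableEq α] (t : α) : α → ℝ :=
  fun x => (if x = t then (1:ℝ) else 0) - (Fintype.card α : ℝ)⁻¹

variable {α : Type u} [Fintype α] [DecidableEq α]

lemma ebase_meanZero [Nonempty α] (t : α) : ∑ x : α, ebase α t x = 0 := by
  have hcard : (Fintype.card α : ℝ) ≠ 0 := by
    simp [Fintype.card_ne_zero]
  simp only [ebase, Finset.sum_sub_distrib, Finset.sum_ite_eq', Finset.mem_univ, if_true,
    Finset.sum_const, Finset.card_univ, nsmul_eq_mul]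
  field_simp
  norm_num

lemma ebase_sq_sum (h2 : 2 ≤ Fintype.card α) (x : α) :
    ∑ t : α, ebase α t x * ebase α t x = 1 - (Fintype.card α : ℝ)⁻¹ := by
  have hcard : (Fintype.card α : ℝ) ≠ 0 := by
    have : 0 < Fintype.card α := by omega
    positivity
  have : ∀ t : α, ebase α t x * ebase α t x
      = (if x = t then (1 - 2 * (Fintype.card α : ℝ)⁻¹) else 0) + (Fintype.card α : ℝ)⁻¹^2 := by
    intro t
    simp only [ebase]
    split_ifs <;> ring
  rw [Finset.sum_congr rfl (fun t _ => this t)]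
  rw [Finset.sum_add_distrib, Finset.sum_ite_eq, Finset.sum_const, Finset.card_univ]
  simp only [Finset.mem_univ, if_true, nsmul_eq_mul]
  field_simp
  ring


lemma percoord {ι : Type*} [DecidableEq ι] [Nonempty α] (S : Finset ι) :
    ∀ (h : α → ℝ), (S.Nonempty → 2 ≤ Fintype.card α) →
    ((Odd S.card ∧ ∑ x : α, h x = 0) ∨ (Even S.card ∧ h = fun _ => 1)) →
    ∃ (J : Type u) (_ : Fintype J) (g : ι → J → α → ℝ),
      (∀ i ∈ S, ∀ j, ∑ x : α, g i j x = 0) ∧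
      (∀ x : α, h x = ∑ j, ∏ i ∈ S, g i j x) := by
  induction S using Finset.strongInductionOn with
  | _ S ih =>
    intro h hcard hpar
    rcases S.eq_empty_or_nonempty with rfl | hS
    · rcases hpar with ⟨hodd, _⟩ | ⟨_, h1⟩
      · simp at hodd
      · refine ⟨PUnit, inferInstance, fun _ _ _ => 0, by simp, ?_⟩
        intro x; simp [h1]
    · obtain ⟨i₀, hi₀⟩ := hS
      have h2 : 2 ≤ Fintype.card α := hcard ⟨i₀, hi₀⟩
      rcases hpar with ⟨hodd, hmz⟩ | ⟨heven, h1⟩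
      · -- odd case: peel off i₀ with target h, rest gets target 1
        have hsub : S.erase i₀ ⊂ S := Finset.erase_ssubset hi₀
        obtain ⟨J, hJ, g, hg0, hgrep⟩ := ih _ hsub (fun _ => 1)
          (fun _ => h2)
          (Or.inr ⟨by
            rw [Finset.card_erase_of_mem hi₀]
            exact Nat.Odd.sub_odd hodd odd_one, rfl⟩)
        refine ⟨J, hJ, fun i j => if i = i₀ then h else g i j, ?_, ?_⟩
        · intro i hi j
          by_cases hii : i = i₀
          · simpa [hii] using hmz
          · simpa [hii] using hg0 i (Finset.mem_erase.2 ⟨hii, hi⟩) j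
        · intro x
          have key : ∀ j : J, (∏ i ∈ S, (fun i j => if i = i₀ then h else g i j) i j x)
              = h x * ∏ i ∈ S.erase i₀, g i j x := by
            intro j
            rw [← Finset.prod_erase_mul _ _ hi₀]
            simp only [if_pos rfl]
            rw [mul_comm]
            congr 1
            exact Finset.prod_congr rfl (fun i hi => by
              simp [(Finset.mem_erase.1 hi).1])
          rw [Finset.sum_congr rfl (fun j _ => key j), ← Finset.mul_sum, ← hgrep x]
          simp
      · -- even case, nonempty: peel off i₀, i₁ with pair representation of 1
        have hcard2 : 2 ≤ S.card := by
          rcases heven with ⟨m, hm⟩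
          have := Finset.card_pos.2 ⟨i₀, hi₀⟩
          omega
        have hne : (S.erase i₀).Nonempty := by
          rw [← Finset.card_pos, Finset.card_erase_of_mem hi₀]; omega
        obtain ⟨i₁, hi₁⟩ := hne
        have hi10 : i₁ ≠ i₀ := (Finset.mem_erase.1 hi₁).1
        have hsub : (S.erase i₀).erase i₁ ⊂ S :=
          lt_of_le_of_lt (Finset.erase_subset _ _) (Finset.erase_ssubset hi₀)
        obtain ⟨J, hJ, g, hg0, hgrep⟩ := ih _ hsub (fun _ => 1)
          (fun _ => h2)
          (Or.inr ⟨by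
            rw [Finset.card_erase_of_mem hi₁, Finset.card_erase_of_mem hi₀]
            rcases heven with ⟨m, hm⟩
            exact ⟨m - 1, by omega⟩, rfl⟩)
        set c : ℝ := 1 - (Fintype.card α : ℝ)⁻¹ with hc
        have hcne : c ≠ 0 := by
          have hlt : (Fintype.card α : ℝ)⁻¹ < 1 := by
            rw [inv_lt_one_iff₀]
            right; exact_mod_cast by omega
          simp only [hc]; intro hcc; nlinarith
        refine ⟨J × α, inferInstance, fun i jt =>
          if i = i₀ then (fun x => c⁻¹ * ebase α jt.2 x)
          else if i = i₁ then ebase α jt.2 else g i jt.1, ?_, ?_⟩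
        · intro i hi j
          by_cases hii : i = i₀
          · simp only [hii, ite_true, if_pos rfl, if_true, ← Finset.mul_sum,
              ebase_meanZero, mul_zero]
          · by_cases hii1 : i = i₁
            · simp [hii1, hi10, ebase_meanZero]
            · simpa [hii, hii1] using
                hg0 i (Finset.mem_erase.2 ⟨hii1, Finset.mem_erase.2 ⟨hii, hi⟩⟩) j.1
        · intro x
          have hprod : ∀ j : J, ∀ t : α,
              (∏ i ∈ S, (if i = i₀ then (fun x => c⁻¹ * ebase α t x)
                else if i = i₁ then ebase α t else g i j) x)
              = (c⁻¹ * ebase α t x) * (ebase α t x * ∏ i ∈ (S.erase i₀).erase i₁, g i j x) := by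
            intro j t
            rw [← Finset.prod_erase_mul _ _ hi₀, ← Finset.prod_erase_mul _ _ hi₁]
            simp only [if_pos rfl, if_neg hi10, ite_true, if_true]
            have : ∀ i ∈ (S.erase i₀).erase i₁,
                (if i = i₀ then (fun x => c⁻¹ * ebase α t x)
                  else if i = i₁ then ebase α t else g i j) x = g i j x := by
              intro i hi
              have h1' := (Finset.mem_erase.1 hi).1
              have h0' := (Finset.mem_erase.1 (Finset.mem_of_mem_erase hi)).1
              simp [h0', h1']
            rw [Finset.prod_congr rfl this]
            ring
          rw [show (∑ jt : J × α, ∏ i ∈ S,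
              (if i = i₀ then (fun x => c⁻¹ * ebase α jt.2 x)
                else if i = i₁ then ebase α jt.2 else g i jt.1) x)
            = ∑ j : J, ∑ t : α, (c⁻¹ * ebase α t x) *
                (ebase α t x * ∏ i ∈ (S.erase i₀).erase i₁, g i j x) from by
            rw [Fintype.sum_prod_type]
            exact Finset.sum_congr rfl fun j _ => Finset.sum_congr rfl fun t _ => hprod j t]
          have hinner : ∀ j : J, ∑ t : α, (c⁻¹ * ebase α t x) *
                (ebase α t x * ∏ i ∈ (S.erase i₀).erase i₁, g i j x)
              = ∏ i ∈ (S.erase i₀).erase i₁, g i j x := by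
            intro j
            have e1 : ∀ t : α, (c⁻¹ * ebase α t x) *
                  (ebase α t x * ∏ i ∈ (S.erase i₀).erase i₁, g i j x)
                = c⁻¹ * (ebase α t x * ebase α t x) * ∏ i ∈ (S.erase i₀).erase i₁, g i j x :=
              fun t => by ring
            rw [Finset.sum_congr rfl fun t _ => e1 t, ← Finset.sum_mul, ← Finset.mul_sum,
              ebase_sq_sum h2 x, ← hc, inv_mul_cancel₀ hcne, one_mul]
          rw [Finset.sum_congr rfl fun j _ => hinner j, h1]
          exact hgrep x


lemma expand {V : Type*} [Fintype V] [DecidableEq V] (X : V → Type u) [∀ v, Fintype (X v)]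
    [∀ v, Nonempty (X v)] [∀ v, DecidableEq (X v)] (B : Finset V) :
    ∀ (lam : (∀ v, X v) → ℝ),
    (∀ x y, (∀ v ∈ B, x v = y v) → lam x = lam y) →
    (∀ a ∈ B, ∀ x, ∑ y : X a, lam (Function.update x a y) = 0) →
    ∃ (K : Type u) (_ : Fintype K) (c : K → ℝ) (f : K → ∀ v : V, X v → ℝ),
      (∀ k, ∀ v ∈ B, ∑ x : X v, f k v x = 0) ∧
      (∀ x, lam x = ∑ k, c k * ∏ v ∈ B, f k v (x v)) := by
  induction B using Finset.induction_on with
  | empty =>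
    intro lam hdep hdeg
    refine ⟨PUnit, inferInstance, fun _ => lam (Classical.arbitrary _), fun _ _ _ => 1,
      by simp, ?_⟩
    intro x
    simp [hdep x (Classical.arbitrary _) (by simp)]
  | @insert a B' ha ih =>
    intro lam hdep hdeg
    have haB : a ∈ insert a B' := Finset.mem_insert_self a B'
    have key : ∀ x, lam x = ∑ t : X a, lam (Function.update x a t) * ebase (X a) t (x a) := by
      intro x
      simp only [ebase, mul_sub, Finset.sum_sub_distrib]
      have h1 : ∑ t : X a, lam (Function.update x a t) * (if x a = t then (1:ℝ) else 0)
          = lam x := by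
        rw [Finset.sum_congr rfl (fun t _ => (mul_ite _ _ _ _).trans (by rw [mul_one, mul_zero]))]
        rw [Finset.sum_ite_eq]
        simp [Function.update_eq_self]
      have h2 : ∑ t : X a, lam (Function.update x a t) * (Fintype.card (X a) : ℝ)⁻¹ = 0 := by
        rw [← Finset.sum_mul, hdeg a haB x, zero_mul]
      rw [h1, h2, sub_zero]
    have hdep' : ∀ t : X a, ∀ x y, (∀ v ∈ B', x v = y v) →
        lam (Function.update x a t) = lam (Function.update y a t) := by
      intro t x y hxy
      refine hdep _ _ ?_
      intro v hv
      rcases Finset.mem_insert.1 hv with rfl | hv'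
      · simp
      · have hva : v ≠ a := fun h => ha (h ▸ hv')
        simp [Function.update_of_ne hva, hxy v hv']
    have hdeg' : ∀ t : X a, ∀ b ∈ B', ∀ x,
        ∑ y : X b, lam (Function.update (Function.update x b y) a t) = 0 := by
      intro t b hb x
      have hba : b ≠ a := fun h => ha (h ▸ hb)
      have : ∀ y : X b, Function.update (Function.update x b y) a t
          = Function.update (Function.update x a t) b y := by
        intro y; exact Function.update_comm hba y t x
      rw [Finset.sum_congr rfl (fun y _ => by rw [this y])]
      exact hdeg b (Finset.mem_insert_of_mem hb) _
    choose K instK c f hmz hrep using fun t : X a =>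
      ih (fun x => lam (Function.update x a t)) (hdep' t) (hdeg' t)
    refine ⟨Σ t : X a, K t, by exact Sigma.instFintype,
      fun σ => c σ.1 σ.2,
      fun σ v x => if h : v = a then ebase (X a) σ.1 (h ▸ x) else f σ.1 σ.2 v x, ?_, ?_⟩
    · intro σ v hv
      rcases Finset.mem_insert.1 hv with rfl | hv'
      · simpa using ebase_meanZero (α := X v) σ.1
      · have hva : v ≠ a := fun h => ha (h ▸ hv')
        simpa [hva] using hmz σ.1 σ.2 v hv'
    · intro x
      rw [key x, ← Finset.univ_sigma_univ, Finset.sum_sigma]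
      refine Finset.sum_congr rfl fun t _ => ?_
      rw [hrep t x, Finset.sum_mul]
      refine Finset.sum_congr rfl fun k _ => ?_
      rw [Finset.prod_insert ha]
      have h1 : (if h : a = a then ebase (X a) t (h ▸ x a) else f t k a (x a))
          = ebase (X a) t (x a) := by simp
      have h2 : ∀ v ∈ B', (if h : v = a then ebase (X a) t (h ▸ x v) else f t k v (x v))
          = f t k v (x v) := by
        intro v hv
        have hva : v ≠ a := fun h => ha (h ▸ hv)
        simp [hva]
      simp only [h1, Finset.prod_congr rfl h2, dif_pos trivial]
      ring


end SDAux

/-- Let `I` be a nonempty finite index set, `A_i ⊆ V` for `i ∈ I`, and let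
`A = △_{i∈I} A_i` be the iterated symmetric difference (the set of elements lying in an
odd number of the `A_i`).  Suppose `|𝔛_v| ≥ 2` for every `v ∈ ⋃_{i∈I} A_i`.  Then every
`A`-degenerate function `λ : 𝔛_A → ℝ` (encoded as a function of the full vector
`x ∈ 𝔛_V` depending only on the coordinates in `A`) is a finite sum of products of
`A_i`-degenerate functions. -/
theorem degenerate_iterated_symmdiff_decomposition
    {V : Type*} [Fintype V] [DecidableEq V]
    (X : V → Type*) [∀ v, Fintype (X v)] [∀ v, Nonempty (X v)]
    {ι : Type*} [DecidableEq ι] (I : Finset ι) (hI : I.Nonempty)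
    (Ai : ι → Finset V)
    (A : Finset V)
    (hA : A = Finset.univ.filter (fun v => Odd ((I.filter (fun i => v ∈ Ai i)).card)))
    (hcard : ∀ v ∈ I.biUnion Ai, 2 ≤ Fintype.card (X v))
    (lam : (∀ v, X v) → ℝ)
    (hdep : ∀ x y : ∀ v, X v, (∀ v ∈ A, x v = y v) → lam x = lam y)
    (hdeg : ∀ a ∈ A, ∀ x : ∀ v, X v, ∑ y : X a, lam (Function.update x a y) = 0) :
    ∃ (n : ℕ) (lamF : Fin n → ι → ((∀ v, X v) → ℝ)),
      (∀ j, ∀ i ∈ I,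
        (∀ x y : ∀ v, X v, (∀ v ∈ Ai i, x v = y v) → lamF j i x = lamF j i y) ∧
        (∀ a ∈ Ai i, ∀ x : ∀ v, X v, ∑ y : X a, lamF j i (Function.update x a y) = 0)) ∧
      (∀ x : ∀ v, X v, lam x = ∑ j, ∏ i ∈ I, lamF j i x) := by
  classical
  obtain ⟨i₀, hi₀⟩ := hI
  -- notation
  set S : V → Finset ι := fun v => I.filter (fun i => v ∈ Ai i) with hS
  have hmemA : ∀ v, v ∈ A ↔ Odd (S v).card := by
    intro v; rw [hA]; simp [hS]
  -- Step 1: expand lam into pure tensors over A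
  obtain ⟨K, instK, c, f, hmz, hrep⟩ := expand X A lam hdep hdeg
  -- Step 2: per coordinate representation
  have hpc : ∀ (k : K) (v : V),
      ∃ (J : Type _) (_ : Fintype J) (g : ι → J → X v → ℝ),
        (∀ i ∈ S v, ∀ j, ∑ x : X v, g i j x = 0) ∧
        (∀ x : X v, (if v ∈ A then f k v else fun _ => (1:ℝ)) x = ∑ j, ∏ i ∈ S v, g i j x) := by
    intro k v
    refine percoord (S v) _ ?_ ?_
    · rintro ⟨i, hi⟩
      exact hcard v (Finset.mem_biUnion.2 ⟨i, (Finset.mem_filter.1 hi).1,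
        (Finset.mem_filter.1 hi).2⟩)
    · by_cases hvA : v ∈ A
      · exact Or.inl ⟨(hmemA v).1 hvA, by rw [if_pos hvA]; exact hmz k v hvA⟩
      · exact Or.inr ⟨Nat.not_odd_iff_even.1 (fun h => hvA ((hmemA v).2 h)), by
          rw [if_neg hvA]⟩
  choose J instJ g hg0 hgrep using hpc
  -- total index type
  let T : Type _ := Σ k : K, ∀ v : V, J k v
  letI : ∀ (k : K) (v : V), Fintype (J k v) := instJ
  -- the functions
  let lamF : T → ι → (∀ v, X v) → ℝ := fun σ i x =>
    (if i = i₀ then c σ.1 else 1) * ∏ v ∈ Ai i, g σ.1 v i (σ.2 v) (x v)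
  have hdepF : ∀ σ : T, ∀ i, ∀ x y : ∀ v, X v,
      (∀ v ∈ Ai i, x v = y v) → lamF σ i x = lamF σ i y := by
    intro σ i x y hxy
    simp only [lamF]
    congr 1
    exact Finset.prod_congr rfl fun v hv => by rw [hxy v hv]
  have hdegF : ∀ σ : T, ∀ i ∈ I, ∀ a ∈ Ai i, ∀ x : ∀ v, X v,
      ∑ y : X a, lamF σ i (Function.update x a y) = 0 := by
    intro σ i hi a ha x
    have hprod : ∀ y : X a, (∏ v ∈ Ai i, g σ.1 v i (σ.2 v) (Function.update x a y v))
        = (∏ v ∈ (Ai i).erase a, g σ.1 v i (σ.2 v) (x v)) * g σ.1 a i (σ.2 a) y := by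
      intro y
      rw [← Finset.prod_erase_mul _ _ ha]
      congr 1
      · exact Finset.prod_congr rfl fun v hv => by
          rw [Function.update_of_ne (Finset.mem_erase.1 hv).1]
      · rw [Function.update_self]
    have h0 : ∑ y : X a, g σ.1 a i (σ.2 a) y = 0 :=
      hg0 σ.1 a i (Finset.mem_filter.2 ⟨hi, ha⟩) (σ.2 a)
    simp only [lamF, hprod]
    rw [← Finset.mul_sum, ← Finset.mul_sum, h0, mul_zero, mul_zero]
  -- main identity over T
  have hmain : ∀ x : ∀ v, X v, lam x = ∑ σ : T, ∏ i ∈ I, lamF σ i x := by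
    intro x
    rw [hrep x, ← Finset.univ_sigma_univ, Finset.sum_sigma]
    refine Finset.sum_congr rfl fun k _ => ?_
    have hterm : ∀ p : ∀ v : V, J k v,
        (∏ i ∈ I, lamF ⟨k, p⟩ i x)
        = c k * ∏ v : V, ∏ i ∈ S v, g k v i (p v) (x v) := by
      intro p
      simp only [lamF]
      rw [Finset.prod_mul_distrib, Finset.prod_ite_eq' I i₀ (fun _ => c k), if_pos hi₀]
      congr 1
      exact Finset.prod_comm' (fun i v => by
        simp only [hS, Finset.mem_filter, Finset.mem_univ]
        tauto)
    rw [Finset.sum_congr rfl fun p _ => hterm p, ← Finset.mul_sum]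
    congr 1
    · rw [← Fintype.prod_sum (fun v (j : J k v) => ∏ i ∈ S v, g k v i j (x v))]
      have : ∀ v : V, (∑ j : J k v, ∏ i ∈ S v, g k v i j (x v))
          = if v ∈ A then f k v (x v) else 1 := by
        intro v
        rw [← hgrep k v (x v)]
        by_cases hvA : v ∈ A <;> simp [hvA]
      rw [Finset.prod_congr rfl fun v _ => this v, Finset.prod_ite_mem Finset.univ A,
        Finset.univ_inter]
  -- convert to Fin n
  refine ⟨Fintype.card T, fun j => lamF ((Fintype.equivFin T).symm j), ?_, ?_⟩
  · intro j i hi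
    exact ⟨hdepF _ i, hdegF _ i hi⟩
  · intro x
    rw [hmain x, ← Equiv.sum_comp (Fintype.equivFin T).symm
      (fun σ => ∏ i ∈ I, lamF σ i x)]
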